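/- Let G be a finite abelian group and let 𝓑⁽¹⁾, …, 𝓑⁽ᵏ⁾ be Bourgain systems in G of dimensions d₁, …, d_k and densities b₁, …, b_k. Then the intersection system 𝓑⁽¹⁾ ∧ ⋯ ∧ 𝓑⁽ᵏ⁾ = (B_ρ⁽¹⁾ ∩ ⋯ ∩ B_ρ⁽ᵏ⁾)_{ρ>0} is a Bourgain system of dimension at most 2(d₁ + ⋯ + d_k) and of density at least 4^{−(d₁ + ⋯ + d_k)} · b₁ ⋯ b_k. -/

import Mathlib

open Pointwise

universe u

/-- A Bourgain system of dimension `d` in an abelian group `G`. -/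
def IsBourgainSystem {G : Type u} [AddCommGroup G] (B : ℝ → Set G) (d : ℝ) : Prop :=
  (∀ ρ : ℝ, 0 < ρ → (0 : G) ∈ B ρ) ∧
  (∀ ρ : ℝ, 0 < ρ → -B ρ = B ρ) ∧
  (∀ ρ ρ' : ℝ, 0 < ρ → ρ ≤ ρ' → B ρ ⊆ B ρ') ∧
  (∀ ρ ρ' : ℝ, 0 < ρ → 0 < ρ' → B ρ + B ρ' ⊆ B (ρ + ρ')) ∧
  (∀ ρ : ℝ, 0 < ρ → ∃ X : Set G, (Nat.card X : ℝ) ≤ (2 : ℝ) ^ d ∧ B (2 * ρ) ⊆ X + B ρ)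

section Aux

variable {G : Type u} [AddCommGroup G] [Fintype G]

/-- The dimension of a Bourgain system in a finite group is nonnegative. -/
lemma IsBourgainSystem.dim_nonneg {B : ℝ → Set G} {d : ℝ} (h : IsBourgainSystem B d) :
    (0 : ℝ) ≤ d := by
  obtain ⟨X, hX, hsub⟩ := h.2.2.2.2 1 one_pos
  have h0 : (0 : G) ∈ X + B 1 := hsub (h.1 (2 * 1) (by norm_num))
  obtain ⟨x, hx, -, -, -⟩ := Set.mem_add.1 h0
  have hne : X.Nonempty := ⟨x, hx⟩
  haveI := hne.to_subtype
  have h1 : 1 ≤ Nat.card X := Nat.card_pos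
  have h1' : (1 : ℝ) ≤ (2 : ℝ) ^ d := le_trans (by exact_mod_cast h1) hX
  by_contra hd
  push_neg at hd
  have := Real.rpow_lt_one_of_one_lt_of_neg (by norm_num : (1:ℝ) < 2) hd
  linarith

omit [Fintype G] in
/-- Two-step covering: `B (2ρ) ⊆ W + B (ρ/2)` with `|W| ≤ 2^d · 2^d`. -/
lemma IsBourgainSystem.cover2 {B : ℝ → Set G} {d : ℝ} (h : IsBourgainSystem B d)
    {ρ : ℝ} (hρ : 0 < ρ) :
    ∃ W : Set G, (Nat.card W : ℝ) ≤ (2 : ℝ) ^ d * (2 : ℝ) ^ d ∧ B (2 * ρ) ⊆ W + B (ρ / 2) := by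
  obtain ⟨X, hX, hX2⟩ := h.2.2.2.2 ρ hρ
  obtain ⟨Y, hY, hY2⟩ := h.2.2.2.2 (ρ / 2) (half_pos hρ)
  rw [show 2 * (ρ / 2) = ρ by ring] at hY2
  refine ⟨X + Y, ?_, ?_⟩
  · calc (Nat.card (X + Y) : ℝ) ≤ ((Nat.card X * Nat.card Y : ℕ) : ℝ) := by
          exact_mod_cast Set.natCard_add_le
    _ = (Nat.card X : ℝ) * (Nat.card Y : ℝ) := by push_cast; ring
    _ ≤ (2 : ℝ) ^ d * (2 : ℝ) ^ d :=
        mul_le_mul hX hY (Nat.cast_nonneg _) (Real.rpow_nonneg (by norm_num) _)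
  · calc B (2 * ρ) ⊆ X + B ρ := hX2
    _ ⊆ X + (Y + B (ρ / 2)) := Set.add_subset_add_left hY2
    _ = (X + Y) + B (ρ / 2) := (add_assoc X Y (B (ρ / 2))).symm

/-- From simultaneous coverings `A ⊆ W i + C i` extract a single small set of representatives. -/
lemma exists_cover_reps {k : ℕ} (A : Set G) (W C : Fin k → Set G)
    (hA : ∀ i, A ⊆ W i + C i) :
    ∃ Z : Set G, Nat.card Z ≤ ∏ i, Nat.card (W i) ∧ A ⊆ Z + ⋂ i, (C i + -(C i)) := by
  have hf : ∀ (z : ↥A) (i : Fin k), ∃ w : ↥(W i), (z : G) - (w : G) ∈ C i := by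
    intro z i
    obtain ⟨w, hw, c, hc, hwc⟩ := Set.mem_add.1 (hA i z.2)
    exact ⟨⟨w, hw⟩, by rwa [show (z : G) - w = c by rw [← hwc]; abel]⟩
  choose f hfspec using hf
  let g : ↥(Set.range f) → ↥A := Function.surjInv Set.rangeFactorization_surjective
  have hg : ∀ t, f (g t) = (t : ∀ i, ↥(W i)) := fun t =>
    congrArg Subtype.val (Function.surjInv_eq Set.rangeFactorization_surjective t)
  refine ⟨Set.range (fun t : ↥(Set.range f) => ((g t : ↥A) : G)), ?_, ?_⟩
  · calc Nat.card (Set.range (fun t : ↥(Set.range f) => ((g t : ↥A) : G)))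
        ≤ Nat.card ↥(Set.range f) :=
          Nat.card_le_card_of_surjective _ Set.rangeFactorization_surjective
    _ ≤ Nat.card (∀ i, ↥(W i)) :=
          Nat.card_le_card_of_injective Subtype.val Subtype.val_injective
    _ = ∏ i, Nat.card (W i) := Nat.card_pi
  · intro z hz
    set t : ↥(Set.range f) := ⟨f ⟨z, hz⟩, Set.mem_range_self _⟩ with ht
    have hft : f (g t) = f ⟨z, hz⟩ := hg t
    refine Set.mem_add.2 ⟨((g t : ↥A) : G), ⟨t, rfl⟩, z - ((g t : ↥A) : G), ?_, by abel⟩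
    refine Set.mem_iInter.2 fun i => ?_
    have h1 : z - (f ⟨z, hz⟩ i : G) ∈ C i := hfspec ⟨z, hz⟩ i
    have h2 : ((g t : ↥A) : G) - (f ⟨z, hz⟩ i : G) ∈ C i := by
      have := hfspec (g t) i
      rwa [hft] at this
    exact Set.mem_add.2 ⟨_, h1, -(((g t : ↥A) : G) - (f ⟨z, hz⟩ i : G)),
      Set.neg_mem_neg.2 h2, by abel⟩

/-- The pigeonhole counting: if differences of `S i` land in `T i`, then
`∏ |S i| ≤ |G|^(k-1) · |⋂ T i|`. -/
lemma prod_card_le_of_sub_mem {k : ℕ} (hk : 1 ≤ k) (S T : Fin k → Set G)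
    (hST : ∀ i, ∀ x ∈ S i, ∀ y ∈ S i, x - y ∈ T i) :
    ∏ i, Nat.card (S i) ≤ Fintype.card G ^ (k - 1) * Nat.card (⋂ i, T i) := by
  set i0 : Fin k := ⟨0, hk⟩ with hi0
  set Φ : (∀ i, ↥(S i)) → (Fin k → G) := fun y i => (y i : G) - (y i0 : G) with hΦdef
  set base : ↥(Set.range Φ) → (∀ i, ↥(S i)) := Function.surjInv Set.rangeFactorization_surjective
    with hbasedef
  have hbase : ∀ t, Φ (base t) = (t : Fin k → G) := fun t =>
    congrArg Subtype.val (Function.surjInv_eq Set.rangeFactorization_surjective t)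
  have key : ∀ y : (∀ i, ↥(S i)), ∀ i,
      (y i0 : G) - ((base ⟨Φ y, Set.mem_range_self y⟩) i0 : G) ∈ T i := by
    intro y i
    set z := base ⟨Φ y, Set.mem_range_self y⟩ with hz
    have hΦz : Φ z = Φ y := hbase _
    have h1 : (z i : G) - (z i0 : G) = (y i : G) - (y i0 : G) := congrFun hΦz i
    have h2 : (y i0 : G) - (z i0 : G) = (y i : G) - (z i : G) := by
      apply eq_of_sub_eq_zero
      have h0 : (z i : G) - (z i0 : G) - ((y i : G) - (y i0 : G)) = 0 := sub_eq_zero.2 h1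
      calc (y i0 : G) - (z i0 : G) - ((y i : G) - (z i : G))
          = (z i : G) - (z i0 : G) - ((y i : G) - (y i0 : G)) := by abel
      _ = 0 := h0
    rw [h2]
    exact hST i _ (y i).2 _ (z i).2
  set F : (∀ i, ↥(S i)) → ↥(Set.range Φ) × ↥(⋂ i, T i) := fun y =>
    (⟨Φ y, Set.mem_range_self y⟩,
     ⟨(y i0 : G) - ((base ⟨Φ y, Set.mem_range_self y⟩) i0 : G),
      Set.mem_iInter.2 (key y)⟩) with hF
  have hFinj : Function.Injective F := by
    intro y y' h
    have h1 : Φ y = Φ y' := congrArg (fun p => (Prod.fst p : ↥(Set.range Φ)).val) h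
    have hsub : (⟨Φ y, Set.mem_range_self y⟩ : ↥(Set.range Φ))
        = ⟨Φ y', Set.mem_range_self y'⟩ := Subtype.ext h1
    have h2 : (y i0 : G) - ((base ⟨Φ y, Set.mem_range_self y⟩) i0 : G)
        = (y' i0 : G) - ((base ⟨Φ y', Set.mem_range_self y'⟩) i0 : G) :=
      congrArg (fun p => (Prod.snd p : ↥(⋂ i, T i)).val) h
    rw [hsub] at h2
    have h3 : (y i0 : G) = (y' i0 : G) := by
      have := sub_left_inj.1 h2
      exact this
    funext i
    apply Subtype.ext
    have h4 := congrFun h1 i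
    have h5 : (y i : G) - (y i0 : G) = (y' i : G) - (y' i0 : G) := h4
    rw [h3] at h5
    exact sub_left_inj.1 h5
  have c1 : Nat.card (∀ i, ↥(S i)) ≤ Nat.card ↥(Set.range Φ) * Nat.card ↥(⋂ i, T i) := by
    have := Nat.card_le_card_of_injective F hFinj
    rwa [Nat.card_prod] at this
  have c2 : Nat.card ↥(Set.range Φ) ≤ Fintype.card G ^ (k - 1) := by
    have hzero : ∀ t ∈ Set.range Φ, t i0 = 0 := by
      rintro _ ⟨y, rfl⟩
      simp [hΦdef]
    set J : ↥(Set.range Φ) → ({ i : Fin k // i ≠ i0 } → G) :=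
      fun t j => (t : Fin k → G) j with hJ
    have hJinj : Function.Injective J := by
      intro t t' h
      apply Subtype.ext
      funext i
      by_cases hi : i = i0
      · rw [hi, hzero _ t.2, hzero _ t'.2]
      · exact congrFun h ⟨i, hi⟩
    calc Nat.card ↥(Set.range Φ) ≤ Nat.card ({ i : Fin k // i ≠ i0 } → G) :=
          Nat.card_le_card_of_injective J hJinj
    _ = Fintype.card G ^ (k - 1) := by
        rw [Nat.card_fun, Nat.card_eq_fintype_card, Nat.card_eq_fintype_card]
        congr 1
        rw [Fintype.card_subtype_compl, Fintype.card_subtype_eq, Fintype.card_fin]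
  calc ∏ i, Nat.card (S i) = Nat.card (∀ i, ↥(S i)) := Nat.card_pi.symm
  _ ≤ Nat.card ↥(Set.range Φ) * Nat.card ↥(⋂ i, T i) := c1
  _ ≤ Fintype.card G ^ (k - 1) * Nat.card (⋂ i, T i) :=
      Nat.mul_le_mul_right _ c2

/-- Halving: `|B 1| ≤ 2^d · |B (1/2)|`. -/
lemma IsBourgainSystem.card_one_le {B : ℝ → Set G} {d : ℝ} (h : IsBourgainSystem B d) :
    (Nat.card (B 1) : ℝ) ≤ (2 : ℝ) ^ d * Nat.card (B (1 / 2)) := by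
  obtain ⟨X, hX, hsub⟩ := h.2.2.2.2 (1 / 2) (by norm_num)
  rw [show 2 * (1 / 2 : ℝ) = 1 by norm_num] at hsub
  calc (Nat.card (B 1) : ℝ) ≤ (Nat.card (X + B (1 / 2)) : ℝ) := by
        exact_mod_cast Nat.card_mono (Set.toFinite _) hsub
  _ ≤ (Nat.card X : ℝ) * Nat.card (B (1 / 2)) := by exact_mod_cast Set.natCard_add_le
  _ ≤ (2 : ℝ) ^ d * Nat.card (B (1 / 2)) :=
      mul_le_mul_of_nonneg_right hX (Nat.cast_nonneg _)

end Aux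

theorem statement7 {G : Type u} [AddCommGroup G] [Fintype G] (k : ℕ) (hk : 1 ≤ k)
    (B : Fin k → ℝ → Set G) (d : Fin k → ℝ)
    (hB : ∀ i, IsBourgainSystem (B i) (d i)) :
    IsBourgainSystem (fun ρ => ⋂ i, B i ρ) (2 * ∑ i, d i) ∧
      (4 : ℝ) ^ (-∑ i, d i) * ∏ i, ((Nat.card (B i 1) : ℝ) / (Fintype.card G : ℝ))
        ≤ (Nat.card (⋂ i, B i 1) : ℝ) / (Fintype.card G : ℝ) := by
  have hsym : ∀ i (ρ : ℝ), 0 < ρ → ∀ x : G, x ∈ B i ρ → -x ∈ B i ρ := by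
    intro i ρ hρ x hx
    rw [← (hB i).2.1 ρ hρ]
    simpa [Set.mem_neg] using hx
  constructor
  · refine ⟨?_, ?_, ?_, ?_, ?_⟩
    · intro ρ hρ
      exact Set.mem_iInter.2 fun i => (hB i).1 ρ hρ
    · intro ρ hρ
      ext x
      simp only [Set.mem_neg, Set.mem_iInter]
      exact ⟨fun h i => by simpa using hsym i ρ hρ _ (h i),
        fun h i => hsym i ρ hρ _ (h i)⟩
    · intro ρ ρ' hρ hρρ'
      exact Set.iInter_mono fun i => (hB i).2.2.1 ρ ρ' hρ hρρ'
    · intro ρ ρ' hρ hρ'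
      intro x hx
      obtain ⟨a, ha, b, hb, hab⟩ := Set.mem_add.1 hx
      refine Set.mem_iInter.2 fun i => ?_
      have := (hB i).2.2.2.1 ρ ρ' hρ hρ'
        (Set.add_mem_add (Set.mem_iInter.1 ha i) (Set.mem_iInter.1 hb i))
      rwa [hab] at this
    · intro ρ hρ
      have hcov : ∀ i, ∃ W : Set G,
          (Nat.card W : ℝ) ≤ (2 : ℝ) ^ d i * (2 : ℝ) ^ d i ∧ B i (2 * ρ) ⊆ W + B i (ρ / 2) :=
        fun i => (hB i).cover2 hρ
      choose W hWcard hWsub using hcov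
      obtain ⟨Z, hZcard, hZsub⟩ := exists_cover_reps (⋂ i, B i (2 * ρ)) W (fun i => B i (ρ / 2))
        (fun i => (Set.iInter_subset _ i).trans (hWsub i))
      refine ⟨Z, ?_, ?_⟩
      · calc (Nat.card Z : ℝ) ≤ ((∏ i, Nat.card (W i) : ℕ) : ℝ) := by exact_mod_cast hZcard
        _ = ∏ i, (Nat.card (W i) : ℝ) := by push_cast; rfl
        _ ≤ ∏ i, (2 : ℝ) ^ (2 * d i) := by
            refine Finset.prod_le_prod (fun i _ => Nat.cast_nonneg _) fun i _ => ?_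
            calc (Nat.card (W i) : ℝ) ≤ (2 : ℝ) ^ d i * (2 : ℝ) ^ d i := hWcard i
            _ = (2 : ℝ) ^ (2 * d i) := by
                rw [two_mul, Real.rpow_add (by norm_num : (0:ℝ) < 2)]
        _ = (2 : ℝ) ^ (2 * ∑ i, d i) := by
            rw [Finset.mul_sum, Real.rpow_sum_of_pos (by norm_num : (0:ℝ) < 2)]
      · refine hZsub.trans (Set.add_subset_add_left ?_)
        refine Set.iInter_mono fun i => ?_
        have hneg : -(B i (ρ / 2)) = B i (ρ / 2) := (hB i).2.1 (ρ / 2) (half_pos hρ)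
        rw [hneg]
        have := (hB i).2.2.2.1 (ρ / 2) (ρ / 2) (half_pos hρ) (half_pos hρ)
        rwa [show ρ / 2 + ρ / 2 = ρ by ring] at this
  · -- density bound
    set S := ∑ i, d i with hSdef
    have hS : 0 ≤ S := Finset.sum_nonneg fun i _ => (hB i).dim_nonneg
    have hg : (0 : ℝ) < (Fintype.card G : ℝ) := by exact_mod_cast Fintype.card_pos
    set g : ℝ := (Fintype.card G : ℝ) with hgdef
    have hsub : ∀ i, ∀ x ∈ B i (1 / 2), ∀ y ∈ B i (1 / 2), x - y ∈ B i 1 := by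
      intro i x hx y hy
      have hy' : -y ∈ B i (1 / 2) := hsym i (1 / 2) (by norm_num) y hy
      have := (hB i).2.2.2.1 (1 / 2) (1 / 2) (by norm_num) (by norm_num)
        (Set.add_mem_add hx hy')
      rw [show (1 / 2 : ℝ) + 1 / 2 = 1 by norm_num] at this
      rwa [sub_eq_add_neg]
    have key : (∏ i, (Nat.card (B i (1 / 2)) : ℝ))
        ≤ g ^ (k - 1) * Nat.card (⋂ i, B i 1) := by
      have h0 : (∏ i, Nat.card (B i (1 / 2)))
          ≤ Fintype.card G ^ (k - 1) * Nat.card (⋂ i, B i 1) :=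
        prod_card_le_of_sub_mem hk (fun i => B i (1 / 2)) (fun i => B i 1) hsub
      calc (∏ i, (Nat.card (B i (1 / 2)) : ℝ))
          = ((∏ i, Nat.card (B i (1 / 2)) : ℕ) : ℝ) := by push_cast; rfl
      _ ≤ ((Fintype.card G ^ (k - 1) * Nat.card (⋂ i, B i 1) : ℕ) : ℝ) := Nat.cast_le.2 h0
      _ = g ^ (k - 1) * Nat.card (⋂ i, B i 1) := by push_cast; rfl
    have hP : ∀ i, (Nat.card (B i 1) : ℝ) ≤ (2 : ℝ) ^ d i * Nat.card (B i (1 / 2)) :=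
      fun i => (hB i).card_one_le
    have hprod : ∏ i, ((Nat.card (B i 1) : ℝ) / g) = (∏ i, (Nat.card (B i 1) : ℝ)) / g ^ k := by
      rw [Finset.prod_div_distrib, Finset.prod_const, Finset.card_univ, Fintype.card_fin]
    rw [hprod, ← mul_div_assoc, div_le_div_iff₀ (by positivity) hg]
    have hgk : g ^ k = g ^ (k - 1) * g := by
      conv_lhs => rw [show k = (k - 1) + 1 by omega]
      rw [pow_succ]
    have hP' : (∏ i, (Nat.card (B i 1) : ℝ))
        ≤ (2 : ℝ) ^ S * (g ^ (k - 1) * Nat.card (⋂ i, B i 1)) := by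
      calc (∏ i, (Nat.card (B i 1) : ℝ))
          ≤ ∏ i, ((2 : ℝ) ^ d i * Nat.card (B i (1 / 2))) :=
            Finset.prod_le_prod (fun i _ => Nat.cast_nonneg _) fun i _ => hP i
      _ = (∏ i, (2 : ℝ) ^ d i) * ∏ i, (Nat.card (B i (1 / 2)) : ℝ) := Finset.prod_mul_distrib
      _ = (2 : ℝ) ^ S * ∏ i, (Nat.card (B i (1 / 2)) : ℝ) := by
          rw [hSdef, Real.rpow_sum_of_pos (by norm_num : (0:ℝ) < 2)]
      _ ≤ (2 : ℝ) ^ S * (g ^ (k - 1) * Nat.card (⋂ i, B i 1)) :=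
          mul_le_mul_of_nonneg_left key (Real.rpow_nonneg (by norm_num) _)
    have h4 : (4 : ℝ) ^ (-S) * (2 : ℝ) ^ S ≤ 1 := by
      have h42 : (4 : ℝ) = (2 : ℝ) ^ (2 : ℝ) := by
        rw [show (2 : ℝ) = ((2 : ℕ) : ℝ) by norm_num, Real.rpow_natCast]
        norm_num
      calc (4 : ℝ) ^ (-S) * (2 : ℝ) ^ S
          = ((2 : ℝ) ^ (2 : ℝ)) ^ (-S) * (2 : ℝ) ^ S := by rw [← h42]
      _ = (2 : ℝ) ^ ((2 : ℝ) * (-S)) * (2 : ℝ) ^ S := by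
          rw [← Real.rpow_mul (by norm_num : (0:ℝ) ≤ 2)]
      _ = (2 : ℝ) ^ ((2 : ℝ) * (-S) + S) := (Real.rpow_add (by norm_num) _ _).symm
      _ ≤ (2 : ℝ) ^ (0 : ℝ) :=
          Real.rpow_le_rpow_of_exponent_le one_le_two (by linarith)
      _ = 1 := Real.rpow_zero 2
    have h4nn : (0 : ℝ) ≤ (4 : ℝ) ^ (-S) := Real.rpow_nonneg (by norm_num) _
    calc (4 : ℝ) ^ (-S) * (∏ i, (Nat.card (B i 1) : ℝ)) * g
        ≤ (4 : ℝ) ^ (-S) * ((2 : ℝ) ^ S * (g ^ (k - 1) * Nat.card (⋂ i, B i 1))) * g := by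
          gcongr
    _ = ((4 : ℝ) ^ (-S) * (2 : ℝ) ^ S) * ((Nat.card (⋂ i, B i 1) : ℝ) * (g ^ (k - 1) * g)) := by
          ring
    _ = ((4 : ℝ) ^ (-S) * (2 : ℝ) ^ S) * ((Nat.card (⋂ i, B i 1) : ℝ) * g ^ k) := by
          rw [hgk]
    _ ≤ 1 * ((Nat.card (⋂ i, B i 1) : ℝ) * g ^ k) :=
          mul_le_mul_of_nonneg_right h4 (by positivity)
    _ = (Nat.card (⋂ i, B i 1) : ℝ) * g ^ k := one_mul _
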